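/- Let S ⊆ ℝ^d be a compact convex set with nonempty interior. Then the constant V := inf over x ∈ S and 0 < Δ ≤ d of vol(S ∩ B(x,Δ)) / Δ^d is strictly positive; in fact V ≥ vol(S) / (max(d, diam(S)))^d. -/

import Mathlib

open MeasureTheory Pointwise

/-- For a compact convex set `S ⊆ ℝ^d` with nonempty interior, the constant
`V = inf_{x ∈ S, 0 < Δ ≤ d} vol(S ∩ B(x,Δ))/Δ^d` is positive; in fact it is at least
`vol(S) / (max d (diam S))^d`. -/
theorem stmt_1 {d : ℕ} (hd : 0 < d) (S : Set (EuclideanSpace ℝ (Fin d)))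
    (hScomp : IsCompact S) (hSconv : Convex ℝ S) (hSint : (interior S).Nonempty) :
    0 < sInf {r : ℝ | ∃ x ∈ S, ∃ Δ : ℝ, 0 < Δ ∧ Δ ≤ d ∧
        r = (volume (S ∩ Metric.closedBall x Δ)).toReal / Δ ^ d} ∧
    (volume S).toReal / max (d : ℝ) (Metric.diam S) ^ d ≤
      sInf {r : ℝ | ∃ x ∈ S, ∃ Δ : ℝ, 0 < Δ ∧ Δ ≤ d ∧
        r = (volume (S ∩ Metric.closedBall x Δ)).toReal / Δ ^ d} := by
  have hdR : (0:ℝ) < d := by exact_mod_cast hd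
  set M : ℝ := max (d : ℝ) (Metric.diam S) with hMdef
  have hM : (0:ℝ) < M := lt_of_lt_of_le hdR (le_max_left _ _)
  have hvolS_lt : volume S < ⊤ := hScomp.measure_lt_top
  have hvolS_pos : 0 < volume S := Measure.measure_pos_of_nonempty_interior _ hSint
  have hVpos : 0 < (volume S).toReal := ENNReal.toReal_pos hvolS_pos.ne' hvolS_lt.ne
  set c : ℝ := (volume S).toReal / M ^ d with hcdef
  have hcpos : 0 < c := div_pos hVpos (pow_pos hM d)
  set A : Set ℝ := {r : ℝ | ∃ x ∈ S, ∃ Δ : ℝ, 0 < Δ ∧ Δ ≤ d ∧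
        r = (volume (S ∩ Metric.closedBall x Δ)).toReal / Δ ^ d} with hAdef
  have hne : A.Nonempty := by
    obtain ⟨x₀, hx₀⟩ := hSint
    exact ⟨_, x₀, interior_subset hx₀, (d : ℝ), hdR, le_refl _, rfl⟩
  have key : ∀ r ∈ A, c ≤ r := by
    rintro r ⟨x, hx, Δ, hΔ, hΔd, rfl⟩
    set t : ℝ := Δ / M with htdef
    have htpos : 0 < t := div_pos hΔ hM
    have ht1 : t ≤ 1 := by
      rw [div_le_one hM]; exact hΔd.trans (le_max_left _ _)
    have hsub : (fun y => x + t • (y - x)) '' S ⊆ S ∩ Metric.closedBall x Δ := by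
      rintro _ ⟨y, hy, rfl⟩
      refine ⟨?_, ?_⟩
      · have h := hSconv hx hy (by linarith : (0:ℝ) ≤ 1 - t) htpos.le (by ring)
        convert h using 1
        module
      · rw [Metric.mem_closedBall, dist_eq_norm]
        have heq : x + t • (y - x) - x = t • (y - x) := by abel
        rw [heq, norm_smul, Real.norm_eq_abs, abs_of_pos htpos]
        have hdy : ‖y - x‖ ≤ Metric.diam S := by
          rw [← dist_eq_norm]; exact Metric.dist_le_diam_of_mem hScomp.isBounded hy hx
        calc t * ‖y - x‖ ≤ t * M :=
              mul_le_mul_of_nonneg_left (hdy.trans (le_max_right _ _)) htpos.le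
          _ = Δ := by rw [htdef]; field_simp
    have himg : (fun y => x + t • (y - x)) '' S = (x - t • x) +ᵥ (t • S) := by
      ext z
      simp only [Set.mem_image, Set.mem_vadd_set, Set.mem_smul_set, vadd_eq_add]
      constructor
      · rintro ⟨y, hy, rfl⟩
        exact ⟨t • y, ⟨y, hy, rfl⟩, by module⟩
      · rintro ⟨_, ⟨y, hy, rfl⟩, rfl⟩
        exact ⟨y, hy, by module⟩
    have hvolT : volume ((fun y => x + t • (y - x)) '' S)
        = ENNReal.ofReal (t ^ d) * volume S := by
      rw [himg, measure_vadd, Measure.addHaar_smul, finrank_euclideanSpace_fin,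
        abs_of_pos (pow_pos htpos d)]
    have hmono : ENNReal.ofReal (t ^ d) * volume S
        ≤ volume (S ∩ Metric.closedBall x Δ) := by
      rw [← hvolT]; exact measure_mono hsub
    have hfin : volume (S ∩ Metric.closedBall x Δ) ≠ ⊤ :=
      ((measure_mono Set.inter_subset_left).trans_lt hvolS_lt).ne
    have hT : t ^ d * (volume S).toReal ≤ (volume (S ∩ Metric.closedBall x Δ)).toReal := by
      have h := ENNReal.toReal_mono hfin hmono
      rwa [ENNReal.toReal_mul, ENNReal.toReal_ofReal (by positivity)] at h
    rw [hcdef, div_le_div_iff₀ (pow_pos hM d) (pow_pos hΔ d)]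
    calc (volume S).toReal * Δ ^ d = t ^ d * (volume S).toReal * M ^ d := by
          rw [htdef, div_pow]; field_simp
      _ ≤ (volume (S ∩ Metric.closedBall x Δ)).toReal * M ^ d :=
          mul_le_mul_of_nonneg_right hT (by positivity)
  have hle : c ≤ sInf A := le_csInf hne key
  exact ⟨lt_of_lt_of_le hcpos hle, hle⟩
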